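/- Completeness direction of the spawning automaton construction, in generalized form: for every LTL^FO formula φ (possibly with free variables) and every valuation v, the set {(𝔄̄, w) | (𝔄̄, w, v, 0) ⊨ φ} is contained in L(A_{φ,v}); moreover, the sequence ρ defined by ρ(i) = {ψ ∈ cl(φ) | (𝔄̄, w, v, i) ⊨ ψ} is a well-defined accepting run of A_{φ,v} over (𝔄̄, w). -/
import Mathlib


/-!
LTL^FO: a first-order temporal logic.  One-sorted signatures with function
symbols, uninterpreted predicate symbols (U-operators, interpreted via the
trace) and interpreted predicate symbols (I-operators), terms, formulae,
first-order temporal structures, and the satisfaction relation in which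
quantifiers range over the actions of the current event.
-/

namespace LTLFO

/-- A (one-sorted) signature: function symbols `Func`, uninterpreted predicate
symbols `UPred` and interpreted predicate symbols `IPred`, with their arities. -/
structure Sig : Type 1 where
  Func : Type
  arF : Func → ℕ
  UPred : Type
  arU : UPred → ℕ
  IPred : Type
  arI : IPred → ℕ

/-- Terms over a signature, built from variables (named by naturals) and
function symbols. -/
inductive Tm (s : Sig) : Type where
  | var (x : ℕ) : Tm s
  | func (f : s.Func) (args : Fin (s.arF f) → Tm s) : Tm s

/-- LTL^FO formulae:
`φ ::= ⊤ | p(t⃗) | r(t⃗) | ¬φ | φ∧φ | Xφ | φUφ | ∀(x₁,…,xₙ):p. φ`. -/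
inductive FOForm (s : Sig) : Type where
  | tt : FOForm s
  | uatom (p : s.UPred) (ts : Fin (s.arU p) → Tm s) : FOForm s
  | iatom (r : s.IPred) (ts : Fin (s.arI r) → Tm s) : FOForm s
  | neg (φ : FOForm s) : FOForm s
  | and (φ ψ : FOForm s) : FOForm s
  | next (φ : FOForm s) : FOForm s
  | until_ (φ ψ : FOForm s) : FOForm s
  | forall_ (p : s.UPred) (xs : Fin (s.arU p) → ℕ) (φ : FOForm s) : FOForm s

/-- An action `(p, d⃗)`: a U-operator together with a matching tuple of domain values. -/
abbrev Action (s : Sig) (D : Type) : Type := Σ p : s.UPred, (Fin (s.arU p) → D)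

variable {s : Sig} {D : Type}

/-- Evaluation of a term in a domain `D`, given an interpretation of the function
symbols and a valuation of the variables. -/
def Tm.eval (fI : (f : s.Func) → (Fin (s.arF f) → D) → D) (v : ℕ → D) : Tm s → D
  | .var x => v x
  | .func f a => fI f (fun k => Tm.eval fI v (a k))

/-- Update a valuation `v` by binding the variables `xs k` to the values `d k`
(i.e. `v ∪ {x₁ ↦ d₁, …, xₙ ↦ dₙ}`). -/
def updVec {n : ℕ} (v : ℕ → D) (xs : Fin n → ℕ) (d : Fin n → D) : ℕ → D :=
  fun x =>
    match (List.finRange n).find? (fun k => xs k == x) with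
    | some k => d k
    | none => v x

/-- An (infinite) first-order temporal structure `(𝔄̄, w)` over a fixed domain `D`:
a rigid interpretation of the function symbols, a per-position interpretation of
the I-operators, and a trace of events (finite sets of actions). -/
structure TStruct (s : Sig) (D : Type) : Type where
  funcI : (f : s.Func) → (Fin (s.arF f) → D) → D
  predI : ℕ → (r : s.IPred) → (Fin (s.arI r) → D) → Prop
  trace : ℕ → Set (Action s D)
  finEv : ∀ i, (trace i).Finite

/-- The satisfaction relation `(𝔄̄, w, v, i) ⊨ φ` (infinite-trace semantics).
Quantifiers range over the actions of the current event. -/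
def Sat (M : TStruct s D) : FOForm s → (ℕ → D) → ℕ → Prop
  | .tt, _, _ => True
  | .uatom p ts, v, i => (⟨p, fun k => Tm.eval M.funcI v (ts k)⟩ : Action s D) ∈ M.trace i
  | .iatom r ts, v, i => M.predI i r (fun k => Tm.eval M.funcI v (ts k))
  | .neg φ, v, i => ¬ Sat M φ v i
  | .and φ ψ, v, i => Sat M φ v i ∧ Sat M ψ v i
  | .next φ, v, i => Sat M φ v (i + 1)
  | .until_ φ ψ, v, i => ∃ k, i ≤ k ∧ Sat M ψ v k ∧ ∀ j, i ≤ j → j < k → Sat M φ v j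
  | .forall_ p xs φ, v, i =>
      ∀ d : Fin (s.arU p) → D, (⟨p, d⟩ : Action s D) ∈ M.trace i → Sat M φ (updVec v xs d) i

/-- The variables occurring in a term. -/
def Tm.vars : Tm s → Set ℕ
  | .var x => {x}
  | .func _ a => ⋃ k, Tm.vars (a k)

/-- The free variables of a formula. -/
def FOForm.fv : FOForm s → Set ℕ
  | .tt => ∅
  | .uatom _ ts => ⋃ k, Tm.vars (ts k)
  | .iatom _ ts => ⋃ k, Tm.vars (ts k)
  | .neg φ => FOForm.fv φ
  | .and φ ψ => FOForm.fv φ ∪ FOForm.fv ψ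
  | .next φ => FOForm.fv φ
  | .until_ φ ψ => FOForm.fv φ ∪ FOForm.fv ψ
  | .forall_ _ xs φ => FOForm.fv φ \ Set.range xs

/-- A sentence is a formula without free variables. -/
def FOForm.Closed (φ : FOForm s) : Prop := FOForm.fv φ = ∅

/-- An LTL^FO sentence is satisfiable iff some first-order temporal structure
(over some nonempty domain) satisfies it at position 0. -/
def FOSatisfiable (s : Sig) (φ : FOForm s) : Prop :=
  ∃ (D : Type) (_ : Nonempty D) (M : TStruct s D) (v : ℕ → D), Sat M φ v 0

end LTLFO

namespace LTLFO

variable {s : Sig} {D : Type}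

/-- The quantifier depth of a formula (the level of its spawning automaton). -/
def depthFO : FOForm s → ℕ
  | .tt => 0
  | .uatom _ _ => 0
  | .iatom _ _ => 0
  | .neg φ => depthFO φ
  | .and φ ψ => max (depthFO φ) (depthFO ψ)
  | .next φ => depthFO φ
  | .until_ φ ψ => max (depthFO φ) (depthFO ψ)
  | .forall_ _ _ φ => depthFO φ + 1

/-- The restricted subformula function `sf|∀`, treating quantified subformulae as
atomic. -/
def sfA : FOForm s → Set (FOForm s)
  | .tt => {.tt}
  | .uatom p ts => {.uatom p ts}
  | .iatom r ts => {.iatom r ts}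
  | .neg φ => insert (.neg φ) (sfA φ)
  | .and φ ψ => insert (.and φ ψ) (sfA φ ∪ sfA ψ)
  | .next φ => insert (.next φ) (sfA φ)
  | .until_ φ ψ => insert (.until_ φ ψ) (sfA φ ∪ sfA ψ)
  | .forall_ p xs φ => {.forall_ p xs φ}

/-- The closure `cl(φ)`: the smallest set containing `sf|∀(φ)` closed under negation. -/
def cl (φ : FOForm s) : Set (FOForm s) := sfA φ ∪ (FOForm.neg '' sfA φ)

/-- A complete subset of `cl(φ)` (a state of the spawning automaton `A_φ`). -/
def Complete (φ : FOForm s) (q : Set (FOForm s)) : Prop :=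
  q ⊆ cl φ ∧
  (∀ ψ ∈ sfA φ, (ψ ∈ q ∨ FOForm.neg ψ ∈ q) ∧ ¬ (ψ ∈ q ∧ FOForm.neg ψ ∈ q)) ∧
  (∀ ψ ψ', FOForm.and ψ ψ' ∈ cl φ → (FOForm.and ψ ψ' ∈ q ↔ (ψ ∈ q ∧ ψ' ∈ q))) ∧
  (∀ ψ ψ', FOForm.until_ ψ ψ' ∈ cl φ →
    ((FOForm.until_ ψ ψ' ∈ q → (ψ' ∈ q ∨ ψ ∈ q)) ∧
      (FOForm.until_ ψ ψ' ∉ q → ψ' ∉ q)))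

/-- Definedness condition of `δ→` at a state `q` on the `i`-th input `(𝔄ᵢ, wᵢ)`:
all (possibly negated) atomic formulae of `q` are (respectively not) true there. -/
def AtomsOK (M : TStruct s D) (v : ℕ → D) (i : ℕ) (q : Set (FOForm s)) : Prop :=
  (FOForm.neg FOForm.tt ∉ q) ∧
  (∀ p ts, FOForm.uatom p ts ∈ q →
    (⟨p, fun k => Tm.eval M.funcI v (ts k)⟩ : Action s D) ∈ M.trace i) ∧
  (∀ p ts, FOForm.neg (FOForm.uatom p ts) ∈ q →
    (⟨p, fun k => Tm.eval M.funcI v (ts k)⟩ : Action s D) ∉ M.trace i) ∧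
  (∀ r ts, FOForm.iatom r ts ∈ q → M.predI i r (fun k => Tm.eval M.funcI v (ts k))) ∧
  (∀ r ts, FOForm.neg (FOForm.iatom r ts) ∈ q →
    ¬ M.predI i r (fun k => Tm.eval M.funcI v (ts k)))

/-- The transition relation `q' ∈ δ→(q, (𝔄ᵢ, wᵢ))` of `A_{φ,v}`. -/
def Step (φ : FOForm s) (M : TStruct s D) (v : ℕ → D) (i : ℕ)
    (q q' : Set (FOForm s)) : Prop :=
  AtomsOK M v i q ∧
  (∀ ψ, FOForm.next ψ ∈ cl φ → (FOForm.next ψ ∈ q ↔ ψ ∈ q')) ∧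
  (∀ ψ ψ', FOForm.until_ ψ ψ' ∈ cl φ →
    (FOForm.until_ ψ ψ' ∈ q ↔ (ψ' ∈ q ∨ (ψ ∈ q ∧ FOForm.until_ ψ ψ' ∈ q'))))

/-- A run of `A_{φ,v}` over `(𝔄̄, w)`: a sequence of complete states starting in an
initial state (one containing `φ`) and respecting `δ→`. -/
def IsRun (φ : FOForm s) (M : TStruct s D) (v : ℕ → D) (ρ : ℕ → Set (FOForm s)) : Prop :=
  (∀ i, Complete φ (ρ i)) ∧ φ ∈ ρ 0 ∧ ∀ i, Step φ M v i (ρ i) (ρ (i + 1))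

/-- Local (generalized Büchi) acceptance: for each `ψUψ' ∈ cl(φ)`, the set
`F_{ψUψ'} = {q | ψ' ∈ q ∨ ¬(ψUψ') ∈ q}` is visited infinitely often. -/
def LocallyAccepting (φ : FOForm s) (ρ : ℕ → Set (FOForm s)) : Prop :=
  ∀ ψ ψ', FOForm.until_ ψ ψ' ∈ cl φ →
    ∀ N, ∃ i, N ≤ i ∧ (ψ' ∈ ρ i ∨ FOForm.neg (FOForm.until_ ψ ψ') ∈ ρ i)

/-- The suffix `(𝔄̄ⁱ, wⁱ)` of a first-order temporal structure. -/
def TStruct.shift (M : TStruct s D) (i : ℕ) : TStruct s D where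
  funcI := M.funcI
  predI := fun j => M.predI (i + j)
  trace := fun j => M.trace (i + j)
  finEv := fun j => M.finEv (i + j)

/-- Acceptance for spawning automata `A_{φ,v}` of level at most `n`, by recursion on
the level: a run is accepting if it is a locally accepting run and, at every position
`i`, the spawning obligation `δ↓(ρ(i), (𝔄ᵢ, wᵢ))` is satisfiable by a set of spawned
automata all of which have an accepting run over the suffix `(𝔄̄ⁱ, wⁱ)`:
for every `∀x⃗:p.ψ ∈ ρ(i)` and every action `(p, d⃗) ∈ wᵢ` the automaton
`A_{ψ, v∪{x⃗↦d⃗}}` must accept, and for every `¬∀x⃗:p.ψ ∈ ρ(i)` some action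
`(p, d⃗) ∈ wᵢ` must give an accepting `A_{¬ψ, v∪{x⃗↦d⃗}}`.  (At level `0` the
spawning function is constantly `⊤`.) -/
def AcceptingAux : ℕ → TStruct s D → FOForm s → (ℕ → D) → (ℕ → Set (FOForm s)) → Prop
  | 0, M, φ, v, ρ => IsRun φ M v ρ ∧ LocallyAccepting φ ρ
  | n + 1, M, φ, v, ρ =>
      IsRun φ M v ρ ∧ LocallyAccepting φ ρ ∧
      ∀ i : ℕ,
        (∀ p xs ψ, FOForm.forall_ p xs ψ ∈ ρ i →
          ∀ d : Fin (s.arU p) → D, (⟨p, d⟩ : Action s D) ∈ M.trace i →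
            ∃ ρ', AcceptingAux n (M.shift i) ψ (updVec v xs d) ρ') ∧
        (∀ p xs ψ, FOForm.neg (FOForm.forall_ p xs ψ) ∈ ρ i →
          ∃ d : Fin (s.arU p) → D, (⟨p, d⟩ : Action s D) ∈ M.trace i ∧
            ∃ ρ', AcceptingAux n (M.shift i) (FOForm.neg ψ) (updVec v xs d) ρ')

/-- `ρ` is an accepting run of the spawning automaton `A_{φ,v}` (whose level is the
quantifier depth of `φ`) over the first-order temporal structure `M = (𝔄̄, w)`. -/
def Accepting (M : TStruct s D) (φ : FOForm s) (v : ℕ → D)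
    (ρ : ℕ → Set (FOForm s)) : Prop :=
  AcceptingAux (depthFO φ) M φ v ρ

end LTLFO

namespace LTLFO

section Aux

variable {s : Sig} {D : Type}

lemma self_mem_sfA (φ : FOForm s) : φ ∈ sfA φ := by
  cases φ <;> simp [sfA]

lemma sfA_trans : ∀ χ θ : FOForm s, θ ∈ sfA χ → sfA θ ⊆ sfA χ := by
  intro χ
  induction χ with
  | tt => intro θ h; simp only [sfA, Set.mem_singleton_iff] at h; subst h; exact subset_rfl
  | uatom p ts => intro θ h; simp only [sfA, Set.mem_singleton_iff] at h; subst h; exact subset_rfl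
  | iatom r ts => intro θ h; simp only [sfA, Set.mem_singleton_iff] at h; subst h; exact subset_rfl
  | forall_ p xs φ ih =>
      intro θ h; simp only [sfA, Set.mem_singleton_iff] at h; subst h; exact subset_rfl
  | neg φ ih =>
      intro θ h
      rcases h with rfl | h
      · exact subset_rfl
      · exact (ih θ h).trans (Set.subset_insert _ _)
  | next φ ih =>
      intro θ h
      rcases h with rfl | h
      · exact subset_rfl
      · exact (ih θ h).trans (Set.subset_insert _ _)
  | and φ ψ ih1 ih2 =>
      intro θ h
      rcases h with rfl | h | h
      · exact subset_rfl
      · exact (ih1 θ h).trans ((Set.subset_union_left).trans (Set.subset_insert _ _))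
      · exact (ih2 θ h).trans ((Set.subset_union_right).trans (Set.subset_insert _ _))
  | until_ φ ψ ih1 ih2 =>
      intro θ h
      rcases h with rfl | h | h
      · exact subset_rfl
      · exact (ih1 θ h).trans ((Set.subset_union_left).trans (Set.subset_insert _ _))
      · exact (ih2 θ h).trans ((Set.subset_union_right).trans (Set.subset_insert _ _))

lemma sfA_subset_cl (φ : FOForm s) : sfA φ ⊆ cl φ := Set.subset_union_left

lemma mem_sfA_and_left (ψ ψ' : FOForm s) : ψ ∈ sfA (FOForm.and ψ ψ') := by
  simp [sfA, self_mem_sfA]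

lemma mem_sfA_and_right (ψ ψ' : FOForm s) : ψ' ∈ sfA (FOForm.and ψ ψ') := by
  simp [sfA, self_mem_sfA]

lemma mem_sfA_until_left (ψ ψ' : FOForm s) : ψ ∈ sfA (FOForm.until_ ψ ψ') := by
  simp [sfA, self_mem_sfA]

lemma mem_sfA_until_right (ψ ψ' : FOForm s) : ψ' ∈ sfA (FOForm.until_ ψ ψ') := by
  simp [sfA, self_mem_sfA]

lemma mem_sfA_next (ψ : FOForm s) : ψ ∈ sfA (FOForm.next ψ) := by
  simp [sfA, self_mem_sfA]

lemma neg_mem_cl {φ ψ : FOForm s} (h : ψ ∈ sfA φ) : FOForm.neg ψ ∈ cl φ :=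
  Or.inr ⟨ψ, h, rfl⟩

lemma and_mem_sfA_of_cl {φ ψ ψ' : FOForm s} (h : FOForm.and ψ ψ' ∈ cl φ) :
    FOForm.and ψ ψ' ∈ sfA φ := by
  rcases h with h | ⟨θ, _, heq⟩
  · exact h
  · exact absurd heq (by simp)

lemma until_mem_sfA_of_cl {φ ψ ψ' : FOForm s} (h : FOForm.until_ ψ ψ' ∈ cl φ) :
    FOForm.until_ ψ ψ' ∈ sfA φ := by
  rcases h with h | ⟨θ, _, heq⟩
  · exact h
  · exact absurd heq (by simp)

lemma next_mem_sfA_of_cl {φ ψ : FOForm s} (h : FOForm.next ψ ∈ cl φ) :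
    FOForm.next ψ ∈ sfA φ := by
  rcases h with h | ⟨θ, _, heq⟩
  · exact h
  · exact absurd heq (by simp)

lemma forall_mem_sfA_of_cl {φ ψ : FOForm s} {p xs} (h : FOForm.forall_ p xs ψ ∈ cl φ) :
    FOForm.forall_ p xs ψ ∈ sfA φ := by
  rcases h with h | ⟨θ, _, heq⟩
  · exact h
  · exact absurd heq (by simp)

-- satisfaction unfolding lemmas
lemma sat_neg {M : TStruct s D} {ψ : FOForm s} {v : ℕ → D} {i : ℕ} :
    Sat M (FOForm.neg ψ) v i ↔ ¬ Sat M ψ v i := Iff.rfl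

lemma sat_and {M : TStruct s D} {ψ ψ' : FOForm s} {v : ℕ → D} {i : ℕ} :
    Sat M (FOForm.and ψ ψ') v i ↔ Sat M ψ v i ∧ Sat M ψ' v i := Iff.rfl

lemma sat_next {M : TStruct s D} {ψ : FOForm s} {v : ℕ → D} {i : ℕ} :
    Sat M (FOForm.next ψ) v i ↔ Sat M ψ v (i + 1) := Iff.rfl

lemma sat_forall {M : TStruct s D} {ψ : FOForm s} {p xs} {v : ℕ → D} {i : ℕ} :
    Sat M (FOForm.forall_ p xs ψ) v i ↔
      ∀ d : Fin (s.arU p) → D, (⟨p, d⟩ : Action s D) ∈ M.trace i →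
        Sat M ψ (updVec v xs d) i := Iff.rfl

lemma sat_until_iff {M : TStruct s D} {ψ ψ' : FOForm s} {v : ℕ → D} {i : ℕ} :
    Sat M (FOForm.until_ ψ ψ') v i ↔
      Sat M ψ' v i ∨ (Sat M ψ v i ∧ Sat M (FOForm.until_ ψ ψ') v (i + 1)) := by
  constructor
  · rintro ⟨k, hik, hk, hj⟩
    rcases eq_or_lt_of_le hik with rfl | hlt
    · exact Or.inl hk
    · exact Or.inr ⟨hj i le_rfl hlt,
        ⟨k, by omega, hk, fun j h1 h2 => hj j (by omega) h2⟩⟩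
  · rintro (h | ⟨h1, k, hk, h2, h3⟩)
    · exact ⟨i, le_rfl, h, fun j hj1 hj2 => absurd hj1 (by omega)⟩
    · refine ⟨k, by omega, h2, fun j hj1 hj2 => ?_⟩
      rcases eq_or_lt_of_le hj1 with rfl | hlt
      · exact h1
      · exact h3 j (by omega) hj2

lemma sat_shift (M : TStruct s D) (i : ℕ) :
    ∀ (ψ : FOForm s) (v : ℕ → D) (j : ℕ),
      Sat (M.shift i) ψ v j ↔ Sat M ψ v (i + j) := by
  intro ψ
  induction ψ with
  | tt => intro v j; simp [Sat]
  | uatom p ts => intro v j; simp [Sat, TStruct.shift]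
  | iatom r ts => intro v j; simp [Sat, TStruct.shift]
  | neg φ ih => intro v j; simp [Sat, ih]
  | and φ ψ ih1 ih2 => intro v j; simp [Sat, ih1, ih2]
  | next φ ih => intro v j; simpa [Sat, ih] using by rw [show i + j + 1 = i + (j+1) by omega]
  | forall_ p xs φ ih => intro v j; simp only [Sat, ih]; exact Iff.rfl
  | until_ φ ψ ih1 ih2 =>
      intro v j
      constructor
      · rintro ⟨k, hk, h2, h3⟩
        refine ⟨i + k, by omega, (ih2 v k).mp h2, fun j' hj1 hj2 => ?_⟩
        have h := (ih1 v (j' - i)).mp (h3 (j' - i) (by omega) (by omega))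
        rwa [show i + (j' - i) = j' by omega] at h
      · rintro ⟨k, hk, h2, h3⟩
        refine ⟨k - i, by omega, ?_, fun j' hj1 hj2 => ?_⟩
        · rw [ih2, show i + (k - i) = k by omega]; exact h2
        · rw [ih1]; exact h3 (i + j') (by omega) (by omega)

/-- The canonical run is a locally accepting run. -/
lemma canonical_run (M : TStruct s D) (φ : FOForm s) (v : ℕ → D)
    (h0 : Sat M φ v 0) :
    IsRun φ M v (fun i => {ψ | ψ ∈ cl φ ∧ Sat M ψ v i}) ∧
      LocallyAccepting φ (fun i => {ψ | ψ ∈ cl φ ∧ Sat M ψ v i}) := by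
  set ρ : ℕ → Set (FOForm s) := fun i => {ψ | ψ ∈ cl φ ∧ Sat M ψ v i} with hρ
  have hmem : ∀ ψ i, ψ ∈ ρ i ↔ ψ ∈ cl φ ∧ Sat M ψ v i := fun _ _ => Iff.rfl
  refine ⟨⟨?_, ?_, ?_⟩, ?_⟩
  · -- completeness of each state
    intro i
    refine ⟨fun ψ h => h.1, ?_, ?_, ?_⟩
    · intro ψ hψ
      constructor
      · by_cases hs : Sat M ψ v i
        · exact Or.inl ⟨sfA_subset_cl φ hψ, hs⟩
        · exact Or.inr ⟨neg_mem_cl hψ, hs⟩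
      · rintro ⟨⟨_, h1⟩, ⟨_, h2⟩⟩
        exact (sat_neg.mp h2) h1
    · intro ψ ψ' hcl
      have hsf := and_mem_sfA_of_cl hcl
      have hψ : ψ ∈ cl φ := sfA_subset_cl φ (sfA_trans _ _ hsf (mem_sfA_and_left ψ ψ'))
      have hψ' : ψ' ∈ cl φ := sfA_subset_cl φ (sfA_trans _ _ hsf (mem_sfA_and_right ψ ψ'))
      constructor
      · rintro ⟨_, hs⟩
        exact ⟨⟨hψ, (sat_and.mp hs).1⟩, ⟨hψ', (sat_and.mp hs).2⟩⟩
      · rintro ⟨⟨_, h1⟩, ⟨_, h2⟩⟩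
        exact ⟨hcl, sat_and.mpr ⟨h1, h2⟩⟩
    · intro ψ ψ' hcl
      have hsf := until_mem_sfA_of_cl hcl
      have hψ : ψ ∈ cl φ := sfA_subset_cl φ (sfA_trans _ _ hsf (mem_sfA_until_left ψ ψ'))
      have hψ' : ψ' ∈ cl φ := sfA_subset_cl φ (sfA_trans _ _ hsf (mem_sfA_until_right ψ ψ'))
      constructor
      · rintro ⟨_, hs⟩
        rcases sat_until_iff.mp hs with h | ⟨h, _⟩
        · exact Or.inl ⟨hψ', h⟩
        · exact Or.inr ⟨hψ, h⟩
      · intro hnq hq'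
        exact hnq ⟨hcl, sat_until_iff.mpr (Or.inl hq'.2)⟩
  · exact ⟨sfA_subset_cl φ (self_mem_sfA φ), h0⟩
  · -- Step
    intro i
    refine ⟨⟨?_, ?_, ?_, ?_, ?_⟩, ?_, ?_⟩
    · rintro ⟨_, hs⟩; exact (sat_neg.mp hs) trivial
    · rintro p ts ⟨_, hs⟩; exact hs
    · rintro p ts ⟨_, hs⟩; exact hs
    · rintro r ts ⟨_, hs⟩; exact hs
    · rintro r ts ⟨_, hs⟩; exact hs
    · intro ψ hcl
      have hsf := next_mem_sfA_of_cl hcl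
      have hψ : ψ ∈ cl φ := sfA_subset_cl φ (sfA_trans _ _ hsf (mem_sfA_next ψ))
      constructor
      · rintro ⟨_, hs⟩; exact ⟨hψ, sat_next.mp hs⟩
      · rintro ⟨_, hs⟩; exact ⟨hcl, sat_next.mpr hs⟩
    · intro ψ ψ' hcl
      have hsf := until_mem_sfA_of_cl hcl
      have hψ : ψ ∈ cl φ := sfA_subset_cl φ (sfA_trans _ _ hsf (mem_sfA_until_left ψ ψ'))
      have hψ' : ψ' ∈ cl φ := sfA_subset_cl φ (sfA_trans _ _ hsf (mem_sfA_until_right ψ ψ'))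
      constructor
      · rintro ⟨_, hs⟩
        rcases sat_until_iff.mp hs with h | ⟨h1, h2⟩
        · exact Or.inl ⟨hψ', h⟩
        · exact Or.inr ⟨⟨hψ, h1⟩, ⟨hcl, h2⟩⟩
      · rintro (⟨_, h⟩ | ⟨⟨_, h1⟩, ⟨_, h2⟩⟩)
        · exact ⟨hcl, sat_until_iff.mpr (Or.inl h)⟩
        · exact ⟨hcl, sat_until_iff.mpr (Or.inr ⟨h1, h2⟩)⟩
  · -- LocallyAccepting
    intro ψ ψ' hcl N
    have hsf := until_mem_sfA_of_cl hcl
    have hψ' : ψ' ∈ cl φ := sfA_subset_cl φ (sfA_trans _ _ hsf (mem_sfA_until_right ψ ψ'))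
    by_cases hs : Sat M (FOForm.until_ ψ ψ') v N
    · obtain ⟨k, hk, hk', _⟩ := hs
      exact ⟨k, hk, Or.inl ⟨hψ', hk'⟩⟩
    · exact ⟨N, le_rfl, Or.inr ⟨neg_mem_cl hsf, hs⟩⟩

lemma canonical_accepting :
    ∀ (n : ℕ) (M : TStruct s D) (φ : FOForm s) (v : ℕ → D), Sat M φ v 0 →
      AcceptingAux n M φ v (fun i => {ψ | ψ ∈ cl φ ∧ Sat M ψ v i}) := by
  intro n
  induction n with
  | zero =>
      intro M φ v h
      exact (canonical_run M φ v h)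
  | succ n ih =>
      intro M φ v h
      obtain ⟨hrun, hloc⟩ := canonical_run M φ v h
      refine ⟨hrun, hloc, fun i => ⟨?_, ?_⟩⟩
      · rintro p xs ψ ⟨_, hs⟩ d hd
        have h1 : Sat M ψ (updVec v xs d) i := sat_forall.mp hs d hd
        refine ⟨_, ih (M.shift i) ψ (updVec v xs d) ?_⟩
        rw [sat_shift]
        simpa using h1
      · rintro p xs ψ ⟨_, hs⟩
        have h1 : ¬ ∀ d : Fin (s.arU p) → D, (⟨p, d⟩ : Action s D) ∈ M.trace i →
            Sat M ψ (updVec v xs d) i := fun hall => (sat_neg.mp hs) (sat_forall.mpr hall)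
        push_neg at h1
        obtain ⟨d, hd, hnd⟩ := h1
        refine ⟨d, hd, _, ih (M.shift i) (FOForm.neg ψ) (updVec v xs d) ?_⟩
        rw [sat_neg, sat_shift]
        simpa using hnd

end Aux

/-- Completeness of the spawning automaton construction, in
generalized form: for every LTL^FO formula `φ` (possibly with free variables) and
every valuation `v`, the set `{(𝔄̄, w) | (𝔄̄, w, v, 0) ⊨ φ}` is contained in
`L(A_{φ,v})`; moreover, for every `(𝔄̄, w)` satisfying `φ`, the sequence
`ρ(i) = {ψ ∈ cl(φ) | (𝔄̄, w, v, i) ⊨ ψ}` is a well-defined accepting run of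
`A_{φ,v}` over `(𝔄̄, w)`. -/
theorem spawning_automaton_complete {s : Sig} {D : Type}
    (φ : FOForm s) (v : ℕ → D) :
    ({M : TStruct s D | Sat M φ v 0} ⊆
        {M : TStruct s D | ∃ ρ : ℕ → Set (FOForm s), Accepting M φ v ρ}) ∧
      ∀ M : TStruct s D, Sat M φ v 0 →
        Accepting M φ v (fun i => {ψ | ψ ∈ cl φ ∧ Sat M ψ v i}) := by
  refine ⟨?_, ?_⟩
  · intro M hM
    exact ⟨_, canonical_accepting (depthFO φ) M φ v hM⟩
  · intro M hM
    exact canonical_accepting (depthFO φ) M φ v hM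

end LTLFO
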